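/- arXiv:2304.08003 — 2 statements merged into one kernel-verified Lean document; each statement's English description precedes it below -/
import Mathlib

section
/- Let G be a balanced bipartite graph with parts of size m+n-1 each (m > n ≥ 1), δ(G) > (3/4)(m+n-1), with a red-blue edge-coloring having no blue connected matching of size n. Suppose B is a largest blue component satisfying |V(B) ∩ V_i| ≥ n for i = 1, 2, and let S be a minimum vertex cover of B. Then all vertices of V(B) \ S lie in a single connected component of the red subgraph. -/
open SimpleGraph Set

/-- A connected `k`-matching in a graph `H`: a matching of `k` edges all of whose
vertices lie in a single connected component of `H`. -/
def ConnMatching {V : Type*} [Fintype V] (H : SimpleGraph V) (k : ℕ) : Prop :=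
  ∃ M : H.Subgraph, M.IsMatching ∧ M.edgeSet.ncard = k ∧
    ∃ c : H.ConnectedComponent, ∀ v ∈ M.verts, H.connectedComponentMk v = c

lemma aux_connMatching {V : Type*} [Fintype V] [DecidableEq V] {n : ℕ}
    (B : SimpleGraph V) (V1 V2 : Finset V) (hdisjV : Disjoint V1 V2)
    (hside : ∀ x y, B.Adj x y → (x ∈ V1 ∧ y ∈ V2) ∨ (x ∈ V2 ∧ y ∈ V1))
    (c : B.ConnectedComponent)
    (hc1 : n ≤ ((V1 : Set V) ∩ c.supp).ncard)
    (hcov : ∀ S' : Set V, S' ⊆ c.supp →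
      (∀ x y, B.Adj x y → x ∈ c.supp → x ∈ S' ∨ y ∈ S') → n ≤ S'.ncard) :
    ConnMatching B n := by
  classical
  have hAdjSupp : ∀ u v : V, B.Adj u v → u ∈ c.supp → v ∈ c.supp := by
    intro u v huv hu
    rw [ConnectedComponent.mem_supp_iff] at hu ⊢
    rw [← hu]
    exact (ConnectedComponent.eq).mpr huv.symm.reachable
  set L : Finset V := V1.filter (fun v => v ∈ c.supp) with hLdef
  have hmemL : ∀ v, v ∈ L ↔ v ∈ V1 ∧ v ∈ c.supp := by
    intro v; simp [hLdef]
  have hLcoe : ((V1 : Set V) ∩ c.supp) = (L : Set V) := by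
    ext v; simp [hLdef]
  have hnL : n ≤ L.card := by
    rw [hLcoe, Set.ncard_coe_finset] at hc1; exact hc1
  set d : ℕ := L.card - n with hd
  set nbr : V → Finset V := fun u => Finset.univ.filter (fun w => B.Adj u w) with hnbr
  have hmemnbr : ∀ u w, w ∈ nbr u ↔ B.Adj u w := by intro u w; simp [hnbr]
  -- key cover inequality
  have key : ∀ A : Finset V, A ⊆ L → n + A.card ≤ L.card + (A.biUnion nbr).card := by
    intro A hA
    set S' : Set V := ↑(L \ A) ∪ ↑(A.biUnion nbr) with hS'
    have hsub : S' ⊆ c.supp := by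
      rintro v (hv | hv)
      · have : v ∈ L := (Finset.mem_sdiff.mp hv).1
        exact ((hmemL v).mp this).2
      · simp only [Finset.coe_biUnion, Set.mem_iUnion, Finset.mem_coe] at hv
        obtain ⟨u, hu, hv⟩ := hv
        exact hAdjSupp u v ((hmemnbr u v).mp hv) ((hmemL u).mp (hA hu)).2
    have hcover : ∀ x y, B.Adj x y → x ∈ c.supp → x ∈ S' ∨ y ∈ S' := by
      intro x y hxy hx
      have hy : y ∈ c.supp := hAdjSupp x y hxy hx
      rcases hside x y hxy with ⟨hx1, hy2⟩ | ⟨hx2, hy1⟩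
      · have hxL : x ∈ L := (hmemL x).mpr ⟨hx1, hx⟩
        by_cases hxA : x ∈ A
        · right; right
          simp only [Finset.coe_biUnion, Set.mem_iUnion, Finset.mem_coe]
          exact ⟨x, hxA, (hmemnbr x y).mpr hxy⟩
        · left; left; exact Finset.mem_coe.mpr (Finset.mem_sdiff.mpr ⟨hxL, hxA⟩)
      · have hyL : y ∈ L := (hmemL y).mpr ⟨hy1, hy⟩
        by_cases hyA : y ∈ A
        · left; right
          simp only [Finset.coe_biUnion, Set.mem_iUnion, Finset.mem_coe]
          exact ⟨y, hyA, (hmemnbr y x).mpr hxy.symm⟩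
        · right; left; exact Finset.mem_coe.mpr (Finset.mem_sdiff.mpr ⟨hyL, hyA⟩)
    have h1 : n ≤ S'.ncard := hcov S' hsub hcover
    have h2 : S'.ncard ≤ (L \ A).card + (A.biUnion nbr).card := by
      calc S'.ncard ≤ (↑(L \ A) : Set V).ncard + (↑(A.biUnion nbr) : Set V).ncard :=
            Set.ncard_union_le _ _
        _ = (L \ A).card + (A.biUnion nbr).card := by
            rw [Set.ncard_coe_finset, Set.ncard_coe_finset]
    have h3 : (L \ A).card + A.card = L.card := Finset.card_sdiff_add_card_eq_card hA
    omega
  -- Hall's theorem setup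
  set inlE : V ↪ (V ⊕ Fin d) := ⟨Sum.inl, Sum.inl_injective⟩ with hinlE
  set inrE : Fin d ↪ (V ⊕ Fin d) := ⟨Sum.inr, Sum.inr_injective⟩ with hinrE
  set t' : {x // x ∈ L} → Finset (V ⊕ Fin d) :=
    fun u => ((nbr u.val).map inlE) ∪ (Finset.univ.map inrE) with ht'
  have hall : ∀ s : Finset {x // x ∈ L}, s.card ≤ (s.biUnion t').card := by
    intro s
    rcases s.eq_empty_or_nonempty with rfl | ⟨u0, hu0⟩
    · simp
    set A : Finset V := s.image Subtype.val with hAdef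
    have hAsub : A ⊆ L := by
      intro v hv
      obtain ⟨u, _, rfl⟩ := Finset.mem_image.mp hv
      exact u.2
    have hAcard : A.card = s.card := Finset.card_image_of_injective s Subtype.val_injective
    have hsubset : ((A.biUnion nbr).map inlE) ∪ (Finset.univ.map inrE) ⊆ s.biUnion t' := by
      intro a ha
      rcases Finset.mem_union.mp ha with ha | ha
      · obtain ⟨w, hw, rfl⟩ := Finset.mem_map.mp ha
        obtain ⟨v, hv, hw⟩ := Finset.mem_biUnion.mp hw
        obtain ⟨u, hu, rfl⟩ := Finset.mem_image.mp hv
        exact Finset.mem_biUnion.mpr ⟨u, hu,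
          Finset.mem_union.mpr (Or.inl (Finset.mem_map.mpr ⟨w, hw, rfl⟩))⟩
      · exact Finset.mem_biUnion.mpr ⟨u0, hu0, Finset.mem_union.mpr (Or.inr ha)⟩
    have hdisj2 : Disjoint ((A.biUnion nbr).map inlE) (Finset.univ.map inrE) := by
      rw [Finset.disjoint_left]
      intro a ha ha'
      obtain ⟨w, _, rfl⟩ := Finset.mem_map.mp ha
      obtain ⟨b, _, hb⟩ := Finset.mem_map.mp ha'
      simp [hinlE, hinrE] at hb
    have hcard2 : (((A.biUnion nbr).map inlE) ∪ (Finset.univ.map inrE)).card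
        = (A.biUnion nbr).card + d := by
      rw [Finset.card_union_of_disjoint hdisj2, Finset.card_map, Finset.card_map,
        Finset.card_univ, Fintype.card_fin]
    have := key A hAsub
    have h4 : ((A.biUnion nbr).map inlE ∪ Finset.univ.map inrE).card ≤ (s.biUnion t').card :=
      Finset.card_le_card hsubset
    omega
  obtain ⟨f, hfinj, hft⟩ := (Finset.all_card_le_biUnion_card_iff_exists_injective t').mp hall
  -- at least n elements are mapped to the left
  set L1 : Finset {x // x ∈ L} := Finset.univ.filter (fun u => (f u).isLeft = true) with hL1
  have hcompl : (Finset.univ.filter (fun u => ¬ (f u).isLeft = true)).card ≤ d := by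
    have hmaps : ∀ u ∈ Finset.univ.filter (fun u => ¬ (f u).isLeft = true),
        f u ∈ (Finset.univ.map inrE : Finset (V ⊕ Fin d)) := by
      intro u hu
      have hu' : ¬ (f u).isLeft = true := (Finset.mem_filter.mp hu).2
      rcases hfu : f u with w | b
      · rw [hfu] at hu'; simp at hu'
      · exact Finset.mem_map.mpr ⟨b, Finset.mem_univ _, rfl⟩
    calc (Finset.univ.filter (fun u => ¬ (f u).isLeft = true)).card
        ≤ (Finset.univ.map inrE : Finset (V ⊕ Fin d)).card :=
          Finset.card_le_card_of_injOn f hmaps (hfinj.injOn)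
      _ = d := by rw [Finset.card_map, Finset.card_univ, Fintype.card_fin]
  have hL1card : n ≤ L1.card := by
    have hsplit := Finset.card_filter_add_card_filter_not
      (s := (Finset.univ : Finset {x // x ∈ L})) (fun u => (f u).isLeft = true)
    have hcu : (Finset.univ : Finset {x // x ∈ L}).card = L.card := by
      rw [Finset.card_univ, Fintype.card_coe]
    have hL1e : L1.card = (Finset.univ.filter (fun u => (f u).isLeft = true)).card := by
      rw [hL1]
    omega
  obtain ⟨L2, hL2sub, hL2card⟩ := Finset.exists_subset_card_eq hL1card
  set g : {x // x ∈ L} → V := fun u => Sum.elim id (fun _ => u.val) (f u) with hg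
  have hgood : ∀ u ∈ L2, B.Adj u.val (g u) ∧ f u = Sum.inl (g u) := by
    intro u hu
    have hu1 : (f u).isLeft := (Finset.mem_filter.mp (hL2sub hu)).2
    rcases hfu : f u with w0 | b0
    · have hgw : g u = w0 := by simp [hg, hfu]
      have hmem : f u ∈ t' u := hft u
      rw [hfu, ht'] at hmem
      rcases Finset.mem_union.mp hmem with h | h
      · obtain ⟨w1, hw1, hww⟩ := Finset.mem_map.mp h
        have hww' : w1 = w0 := by simpa [hinlE] using hww
        subst hww'
        constructor
        · rw [hgw]; exact (hmemnbr u.val w1).mp hw1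
        · rw [hgw]
      · obtain ⟨b1, _, hb⟩ := Finset.mem_map.mp h
        simp [hinrE] at hb
    · rw [hfu] at hu1; simp at hu1
  have hadj : ∀ u ∈ L2, B.Adj u.val (g u) := fun u hu => (hgood u hu).1
  have huV1 : ∀ u : {x // x ∈ L}, u.val ∈ V1 := fun u => ((hmemL u.val).mp u.2).1
  have husupp : ∀ u : {x // x ∈ L}, u.val ∈ c.supp := fun u => ((hmemL u.val).mp u.2).2
  have hgV2 : ∀ u ∈ L2, g u ∈ V2 := by
    intro u hu
    rcases hside u.val (g u) (hadj u hu) with ⟨_, h⟩ | ⟨h, _⟩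
    · exact h
    · exact absurd (huV1 u) (Finset.disjoint_right.mp hdisjV h)
  have hgsupp : ∀ u ∈ L2, g u ∈ c.supp := fun u hu => hAdjSupp _ _ (hadj u hu) (husupp u)
  have hginj : ∀ u ∈ L2, ∀ u' ∈ L2, g u = g u' → u = u' := by
    intro u hu u' hu' h
    apply hfinj
    rw [(hgood u hu).2, (hgood u' hu').2, h]
  have hne : ∀ u ∈ L2, ∀ u' ∈ L2, u.val ≠ g u' := by
    intro u hu u' hu' h
    exact Finset.disjoint_left.mp hdisjV (huV1 u) (h ▸ hgV2 u' hu')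
  -- build the matching subgraph
  set M : B.Subgraph := {
    verts := {v | ∃ u ∈ L2, v = u.val ∨ v = g u}
    Adj := fun a b => ∃ u ∈ L2, (a = u.val ∧ b = g u) ∨ (b = u.val ∧ a = g u)
    adj_sub := by
      rintro a b ⟨u, hu, ⟨rfl, rfl⟩ | ⟨rfl, rfl⟩⟩
      · exact hadj u hu
      · exact (hadj u hu).symm
    edge_vert := by
      rintro a b ⟨u, hu, ⟨rfl, _⟩ | ⟨_, rfl⟩⟩
      · exact ⟨u, hu, Or.inl rfl⟩
      · exact ⟨u, hu, Or.inr rfl⟩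
    symm := by
      constructor
      rintro a b ⟨u, hu, ⟨h1, h2⟩ | ⟨h1, h2⟩⟩
      · exact ⟨u, hu, Or.inr ⟨h1, h2⟩⟩
      · exact ⟨u, hu, Or.inl ⟨h1, h2⟩⟩ } with hM
  refine ⟨M, ?_, ?_, ⟨c, ?_⟩⟩
  · -- IsMatching
    rintro v ⟨u, hu, rfl | rfl⟩
    · refine ⟨g u, ⟨u, hu, Or.inl ⟨rfl, rfl⟩⟩, ?_⟩
      rintro b ⟨u', hu', ⟨h1, h2⟩ | ⟨h1, h2⟩⟩
      · have : u = u' := Subtype.coe_injective h1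
        rw [h2, this]
      · exact absurd h2 (hne u hu u' hu')
    · refine ⟨u.val, ⟨u, hu, Or.inr ⟨rfl, rfl⟩⟩, ?_⟩
      rintro b ⟨u', hu', ⟨h1, h2⟩ | ⟨h1, h2⟩⟩
      · exact absurd h1.symm (hne u' hu' u hu)
      · have : u' = u := hginj u' hu' u hu h2.symm
        rw [h1, this]
  · -- edge count
    have hedges : M.edgeSet = ↑(L2.image (fun u => s(u.val, g u))) := by
      ext e
      induction e using Sym2.ind with
      | _ x y =>
        simp only [Subgraph.mem_edgeSet, Finset.coe_image, Set.mem_image, Finset.mem_coe]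
        constructor
        · rintro ⟨u, hu, ⟨rfl, rfl⟩ | ⟨rfl, rfl⟩⟩
          · exact ⟨u, hu, rfl⟩
          · exact ⟨u, hu, Sym2.eq_swap⟩
        · rintro ⟨u, hu, he⟩
          rcases Sym2.eq_iff.mp he with ⟨h1, h2⟩ | ⟨h1, h2⟩
          · exact ⟨u, hu, Or.inl ⟨h1.symm, h2.symm⟩⟩
          · exact ⟨u, hu, Or.inr ⟨h1.symm, h2.symm⟩⟩
    rw [hedges, Set.ncard_coe_finset, Finset.card_image_of_injOn, hL2card]
    intro u hu u' hu' h
    simp only [Finset.mem_coe] at hu hu'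
    rcases Sym2.eq_iff.mp h with ⟨h1, _⟩ | ⟨h1, h2⟩
    · exact Subtype.coe_injective h1
    · exact absurd h1 (hne u hu u' hu')
  · -- all vertices in component c
    rintro v ⟨u, hu, rfl | rfl⟩
    · exact (ConnectedComponent.mem_supp_iff c u.val).mp (husupp u)
    · exact (ConnectedComponent.mem_supp_iff c (g u)).mp (hgsupp u hu)

theorem stmt_10 {V : Type*} [Fintype V] [DecidableEq V] (m n : ℕ) (hn : 1 ≤ n) (hmn : n < m)
    (G : SimpleGraph V) (V1 V2 : Finset V)
    (hdisj : Disjoint V1 V2) (hcover : V1 ∪ V2 = Finset.univ)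
    (hV1 : V1.card = m + n - 1) (hV2 : V2.card = m + n - 1)
    (hbip : ∀ x y, G.Adj x y → (x ∈ V1 ∧ y ∈ V2) ∨ (x ∈ V2 ∧ y ∈ V1))
    (hδ : ∀ v, 3 * (m + n - 1) < 4 * (G.neighborSet v).ncard)
    (R B : SimpleGraph V) (hcolor : R ⊔ B = G) (hcdisj : Disjoint R B)
    (hnoblue : ¬ ConnMatching B n)
    (c : B.ConnectedComponent)
    (hc1 : n ≤ ((V1 : Set V) ∩ c.supp).ncard) (hc2 : n ≤ ((V2 : Set V) ∩ c.supp).ncard)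
    (hmax : ∀ c' : B.ConnectedComponent,
      n ≤ ((V1 : Set V) ∩ c'.supp).ncard → n ≤ ((V2 : Set V) ∩ c'.supp).ncard →
      c'.supp.ncard ≤ c.supp.ncard)
    (S : Set V) (hSsub : S ⊆ c.supp)
    (hScov : ∀ x y, B.Adj x y → x ∈ c.supp → x ∈ S ∨ y ∈ S)
    (hSmin : ∀ S' : Set V, S' ⊆ c.supp →
      (∀ x y, B.Adj x y → x ∈ c.supp → x ∈ S' ∨ y ∈ S') → S.ncard ≤ S'.ncard) :
    ∃ d : R.ConnectedComponent, ∀ v ∈ c.supp \ S, v ∈ d.supp := by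
  classical
  set p : ℕ := m + n - 1 with hpdef
  have hp2n : 2 * n ≤ p := by omega
  have hdeg4 : ∀ v, 3 * p + 1 ≤ 4 * (G.neighborSet v).ncard := by
    intro v; have := hδ v; omega
  have hBG : ∀ {x y : V}, B.Adj x y → G.Adj x y := by
    intro x y h; rw [← hcolor, sup_adj]; exact Or.inr h
  have hGsplit : ∀ {x y : V}, G.Adj x y → R.Adj x y ∨ B.Adj x y := by
    intro x y h; rw [← hcolor, sup_adj] at h; exact h
  -- |S| ≤ n - 1
  have htS : S.ncard + 1 ≤ n := by
    by_contra hcon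
    push_neg at hcon
    have hnS : n ≤ S.ncard := by omega
    exact hnoblue (aux_connMatching B V1 V2 hdisj (fun x y h => hbip x y (hBG h)) c hc1
      (fun S' hs hc => le_trans hnS (hSmin S' hs hc)))
  -- basic set facts
  have hV1s : (V1 : Set V).ncard = p := by rw [Set.ncard_coe_finset, hV1]
  have hV2s : (V2 : Set V).ncard = p := by rw [Set.ncard_coe_finset, hV2]
  have hV12 : Disjoint (V1 : Set V) (V2 : Set V) := Finset.disjoint_coe.mpr hdisj
  have hmemside : ∀ v : V, v ∈ (V1 : Set V) ∨ v ∈ (V2 : Set V) := by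
    intro v
    have hv : v ∈ V1 ∪ V2 := by rw [hcover]; exact Finset.mem_univ v
    rcases Finset.mem_union.mp hv with h | h
    · exact Or.inl h
    · exact Or.inr h
  have hnbrV2 : ∀ v, v ∈ (V1 : Set V) → (G.neighborSet v) ⊆ (V2 : Set V) := by
    intro v hv w hw
    rcases hbip v w hw with ⟨_, h⟩ | ⟨h, _⟩
    · exact h
    · exact absurd h (Set.disjoint_left.mp hV12 hv)
  have hnbrV1 : ∀ v, v ∈ (V2 : Set V) → (G.neighborSet v) ⊆ (V1 : Set V) := by
    intro v hv w hw
    rcases hbip v w hw with ⟨h, _⟩ | ⟨_, h⟩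
    · exact absurd hv (Set.disjoint_left.mp hV12 h)
    · exact h
  -- F1 : non-cover neighbors of component vertices are red
  have hred : ∀ u w, u ∈ c.supp → u ∉ S → w ∉ S → G.Adj u w → R.Adj u w := by
    intro u w hu huS hwS h
    rcases hGsplit h with hr | hb
    · exact hr
    · rcases hScov u w hb hu with h' | h'
      · exact absurd h' huS
      · exact absurd h' hwS
  -- common neighbor argument: same-side vertices of c.supp \ S are in one red component
  have hsame : ∀ (W : Finset V), ((W : Set V)).ncard = p →
      ∀ u v, u ∈ c.supp → u ∉ S → v ∈ c.supp → v ∉ S →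
      G.neighborSet u ⊆ (W : Set V) → G.neighborSet v ⊆ (W : Set V) →
      R.connectedComponentMk u = R.connectedComponentMk v := by
    intro W hW u v hu huS hv hvS hNu hNv
    have h1 : (G.neighborSet u ∩ G.neighborSet v).ncard
        + (G.neighborSet u ∪ G.neighborSet v).ncard
        = (G.neighborSet u).ncard + (G.neighborSet v).ncard :=
      Set.ncard_inter_add_ncard_union _ _
    have h2 : (G.neighborSet u ∪ G.neighborSet v).ncard ≤ p := by
      rw [← hW]; exact Set.ncard_le_ncard (Set.union_subset hNu hNv)
    have hdu := hdeg4 u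
    have hdv := hdeg4 v
    have h3 : (G.neighborSet u ∩ G.neighborSet v).ncard
        ≤ ((G.neighborSet u ∩ G.neighborSet v) \ S).ncard + S.ncard := by
      calc (G.neighborSet u ∩ G.neighborSet v).ncard
          ≤ (((G.neighborSet u ∩ G.neighborSet v) \ S) ∪ S).ncard := by
            refine Set.ncard_le_ncard ?_ (Set.toFinite _)
            intro a ha
            by_cases haS : a ∈ S
            · exact Or.inr haS
            · exact Or.inl ⟨ha, haS⟩
        _ ≤ ((G.neighborSet u ∩ G.neighborSet v) \ S).ncard + S.ncard :=
            Set.ncard_union_le _ _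
    have hne : (((G.neighborSet u ∩ G.neighborSet v)) \ S).Nonempty := by
      apply Set.nonempty_of_ncard_ne_zero
      omega
    obtain ⟨w, ⟨hw1, hw2⟩, hwS⟩ := hne
    have r1 : R.Adj u w := hred u w hu huS hwS hw1
    have r2 : R.Adj v w := hred v w hv hvS hwS hw2
    exact ConnectedComponent.eq.mpr (r1.reachable.trans r2.reachable.symm)
  -- choose base points
  have hx0 : ∃ x, (x ∈ (V1 : Set V) ∧ x ∈ c.supp) ∧ x ∉ S := by
    by_contra h
    push_neg at h
    have hsub : (V1 : Set V) ∩ c.supp ⊆ S := by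
      rintro v ⟨hv1, hv2⟩; exact h v ⟨hv1, hv2⟩
    have := Set.ncard_le_ncard hsub (Set.toFinite S)
    omega
  have hy0 : ∃ y, (y ∈ (V2 : Set V) ∧ y ∈ c.supp) ∧ y ∉ S := by
    by_contra h
    push_neg at h
    have hsub : (V2 : Set V) ∩ c.supp ⊆ S := by
      rintro v ⟨hv1, hv2⟩; exact h v ⟨hv1, hv2⟩
    have := Set.ncard_le_ncard hsub (Set.toFinite S)
    omega
  obtain ⟨x₀, ⟨hx0V, hx0c⟩, hx0S⟩ := hx0
  obtain ⟨y₀, ⟨hy0V, hy0c⟩, hy0S⟩ := hy0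
  -- reduce to showing the two red components coincide
  suffices hD : R.connectedComponentMk x₀ = R.connectedComponentMk y₀ by
    refine ⟨R.connectedComponentMk x₀, ?_⟩
    rintro v ⟨hv, hvS⟩
    rcases hmemside v with h1 | h2
    · have := hsame V2 hV2s v x₀ hv hvS hx0c hx0S (hnbrV2 v h1) (hnbrV2 x₀ hx0V)
      exact (ConnectedComponent.mem_supp_iff _ _).mpr this
    · have := hsame V1 hV1s v y₀ hv hvS hy0c hy0S (hnbrV1 v h2) (hnbrV1 y₀ hy0V)
      rw [← hD] at this
      exact (ConnectedComponent.mem_supp_iff _ _).mpr this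
  by_contra hD
  -- the two red components
  set X : Set V := ((V1 : Set V) ∩ c.supp) \ S with hXdef
  set Y : Set V := ((V2 : Set V) ∩ c.supp) \ S with hYdef
  set A2 : Set V := ((V2 : Set V) ∩ (R.connectedComponentMk x₀).supp) \ S with hA2def
  set B1 : Set V := ((V1 : Set V) ∩ (R.connectedComponentMk y₀).supp) \ S with hB1def
  set t1 : ℕ := (S ∩ (V1 : Set V)).ncard with ht1def
  set t2 : ℕ := (S ∩ (V2 : Set V)).ncard with ht2def
  have ht12 : t1 + t2 = S.ncard := by
    rw [ht1def, ht2def, ← Set.ncard_union_eq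
      (Set.disjoint_of_subset Set.inter_subset_right Set.inter_subset_right hV12)]
    congr 1
    ext v
    constructor
    · rintro (⟨h, _⟩ | ⟨h, _⟩) <;> exact h
    · intro hv
      rcases hmemside v with h | h
      · exact Or.inl ⟨hv, h⟩
      · exact Or.inr ⟨hv, h⟩
  -- X lies in the red component of x₀, Y in that of y₀
  have hXD1 : X ⊆ (R.connectedComponentMk x₀).supp := by
    rintro v ⟨⟨hv1, hvc⟩, hvS⟩
    exact (ConnectedComponent.mem_supp_iff _ _).mpr
      (hsame V2 hV2s v x₀ hvc hvS hx0c hx0S (hnbrV2 v hv1) (hnbrV2 x₀ hx0V))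
  have hYD2 : Y ⊆ (R.connectedComponentMk y₀).supp := by
    rintro v ⟨⟨hv2, hvc⟩, hvS⟩
    exact (ConnectedComponent.mem_supp_iff _ _).mpr
      (hsame V1 hV1s v y₀ hvc hvS hy0c hy0S (hnbrV1 v hv2) (hnbrV1 y₀ hy0V))
  -- no edges from y₀ to X, from x₀ to Y
  have hXdeg : X.ncard + (G.neighborSet y₀).ncard ≤ p := by
    have hdisjXN : Disjoint (G.neighborSet y₀) X := by
      rw [Set.disjoint_left]
      intro w hw hwX
      have hr : R.Adj y₀ w := hred y₀ w hy0c hy0S hwX.2 hw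
      have h1 : R.connectedComponentMk w = R.connectedComponentMk y₀ :=
        ConnectedComponent.eq.mpr hr.symm.reachable
      have h2 : R.connectedComponentMk w = R.connectedComponentMk x₀ :=
        (ConnectedComponent.mem_supp_iff _ _).mp (hXD1 hwX)
      exact hD (h2 ▸ h1)
    have hsub : (G.neighborSet y₀) ∪ X ⊆ (V1 : Set V) :=
      Set.union_subset (hnbrV1 y₀ hy0V) (fun v hv => hv.1.1)
    have := Set.ncard_le_ncard hsub (Set.toFinite _)
    rw [Set.ncard_union_eq hdisjXN] at this
    omega
  have hYdeg : Y.ncard + (G.neighborSet x₀).ncard ≤ p := by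
    have hdisjYN : Disjoint (G.neighborSet x₀) Y := by
      rw [Set.disjoint_left]
      intro w hw hwY
      have hr : R.Adj x₀ w := hred x₀ w hx0c hx0S hwY.2 hw
      have h1 : R.connectedComponentMk w = R.connectedComponentMk x₀ :=
        ConnectedComponent.eq.mpr hr.symm.reachable
      have h2 : R.connectedComponentMk w = R.connectedComponentMk y₀ :=
        (ConnectedComponent.mem_supp_iff _ _).mp (hYD2 hwY)
      exact hD (h1 ▸ h2)
    have hsub : (G.neighborSet x₀) ∪ Y ⊆ (V2 : Set V) :=
      Set.union_subset (hnbrV2 x₀ hx0V) (fun v hv => hv.1.1)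
    have := Set.ncard_le_ncard hsub (Set.toFinite _)
    rw [Set.ncard_union_eq hdisjYN] at this
    omega
  -- n ≤ |X| + t1, n ≤ |Y| + t2
  have hnX : n ≤ X.ncard + t1 := by
    have hsub : (V1 : Set V) ∩ c.supp ⊆ X ∪ (S ∩ (V1 : Set V)) := by
      rintro v ⟨hv1, hvc⟩
      by_cases hvS : v ∈ S
      · exact Or.inr ⟨hvS, hv1⟩
      · exact Or.inl ⟨⟨hv1, hvc⟩, hvS⟩
    have := le_trans (Set.ncard_le_ncard hsub (Set.toFinite _)) (Set.ncard_union_le _ _)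
    omega
  have hnY : n ≤ Y.ncard + t2 := by
    have hsub : (V2 : Set V) ∩ c.supp ⊆ Y ∪ (S ∩ (V2 : Set V)) := by
      rintro v ⟨hv2, hvc⟩
      by_cases hvS : v ∈ S
      · exact Or.inr ⟨hvS, hv2⟩
      · exact Or.inl ⟨⟨hv2, hvc⟩, hvS⟩
    have := le_trans (Set.ncard_le_ncard hsub (Set.toFinite _)) (Set.ncard_union_le _ _)
    omega
  -- neighbors of x₀ outside S are in A2, etc.
  have hA2deg : (G.neighborSet x₀).ncard ≤ A2.ncard + t2 := by
    have hsub : G.neighborSet x₀ ⊆ A2 ∪ (S ∩ (V2 : Set V)) := by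
      intro w hw
      have hw2 : w ∈ (V2 : Set V) := hnbrV2 x₀ hx0V hw
      by_cases hwS : w ∈ S
      · exact Or.inr ⟨hwS, hw2⟩
      · refine Or.inl ⟨⟨hw2, ?_⟩, hwS⟩
        exact (ConnectedComponent.mem_supp_iff _ _).mpr
          (ConnectedComponent.eq.mpr (hred x₀ w hx0c hx0S hwS hw).symm.reachable)
    have := le_trans (Set.ncard_le_ncard hsub (Set.toFinite _)) (Set.ncard_union_le _ _)
    omega
  have hB1deg : (G.neighborSet y₀).ncard ≤ B1.ncard + t1 := by
    have hsub : G.neighborSet y₀ ⊆ B1 ∪ (S ∩ (V1 : Set V)) := by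
      intro w hw
      have hw1 : w ∈ (V1 : Set V) := hnbrV1 y₀ hy0V hw
      by_cases hwS : w ∈ S
      · exact Or.inr ⟨hwS, hw1⟩
      · refine Or.inl ⟨⟨hw1, ?_⟩, hwS⟩
        exact (ConnectedComponent.mem_supp_iff _ _).mpr
          (ConnectedComponent.eq.mpr (hred y₀ w hy0c hy0S hwS hw).symm.reachable)
    have := le_trans (Set.ncard_le_ncard hsub (Set.toFinite _)) (Set.ncard_union_le _ _)
    omega
  have hdx := hdeg4 x₀
  have hdy := hdeg4 y₀
  -- sides of the new blue component are large
  have hB1n : n ≤ B1.ncard := by omega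
  have hA2n : n ≤ A2.ncard := by omega
  -- all A2–B1 edges are blue
  have hcross : ∀ w ∈ A2, ∀ z ∈ B1, G.Adj w z → B.Adj w z := by
    intro w hw z hz h
    rcases hGsplit h with hr | hb
    · exfalso
      have h1 : R.connectedComponentMk w = R.connectedComponentMk x₀ :=
        (ConnectedComponent.mem_supp_iff _ _).mp hw.1.2
      have h2 : R.connectedComponentMk z = R.connectedComponentMk y₀ :=
        (ConnectedComponent.mem_supp_iff _ _).mp hz.1.2
      have h3 : R.connectedComponentMk w = R.connectedComponentMk z :=
        ConnectedComponent.eq.mpr hr.reachable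
      exact hD (by rw [← h1, h3, h2])
    · exact hb
  -- intersection counting helper
  have hIntCount : ∀ (W : Finset V) (P : Set V), (W : Set V).ncard = p → P ⊆ (W : Set V) →
      ∀ z, G.neighborSet z ⊆ (W : Set V) →
      (G.neighborSet z).ncard + P.ncard ≤ (G.neighborSet z ∩ P).ncard + p := by
    intro W P hW hP z hNz
    have h1 : (G.neighborSet z ∩ P).ncard + (G.neighborSet z ∪ P).ncard
        = (G.neighborSet z).ncard + P.ncard := Set.ncard_inter_add_ncard_union _ _
    have h2 : (G.neighborSet z ∪ P).ncard ≤ p := by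
      rw [← hW]; exact Set.ncard_le_ncard (Set.union_subset hNz hP)
    omega
  have hA2subV2 : A2 ⊆ (V2 : Set V) := fun v hv => hv.1.1
  have hB1subV1 : B1 ⊆ (V1 : Set V) := fun v hv => hv.1.1
  -- dichotomy on the B1 side
  have hdichoB1 : (∀ z ∈ B1, ∀ z' ∈ B1, ∃ w ∈ A2, G.Adj z w ∧ G.Adj z' w)
      ∨ p + 3 ≤ 4 * t2 := by
    by_cases hh : ∀ z ∈ B1, ∀ z' ∈ B1, ∃ w ∈ A2, G.Adj z w ∧ G.Adj z' w
    · exact Or.inl hh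
    · right
      push_neg at hh
      obtain ⟨z, hz, z', hz', hno⟩ := hh
      have hd1 := hIntCount V2 A2 hV2s hA2subV2 z (hnbrV2 z (hB1subV1 hz))
      have hd2 := hIntCount V2 A2 hV2s hA2subV2 z' (hnbrV2 z' (hB1subV1 hz'))
      have hdisj' : Disjoint (G.neighborSet z ∩ A2) (G.neighborSet z' ∩ A2) := by
        rw [Set.disjoint_left]
        rintro w ⟨hw1, hw2⟩ ⟨hw3, _⟩
        exact (hno w hw2) hw1 hw3
      have hsum : (G.neighborSet z ∩ A2).ncard + (G.neighborSet z' ∩ A2).ncard ≤ A2.ncard := by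
        rw [← Set.ncard_union_eq hdisj']
        exact Set.ncard_le_ncard (Set.union_subset Set.inter_subset_right Set.inter_subset_right)
          (Set.toFinite _)
      have hdz := hdeg4 z
      have hdz' := hdeg4 z'
      omega
  -- dichotomy on the A2 side
  have hdichoA2 : (∀ w ∈ A2, ∀ w' ∈ A2, ∃ z ∈ B1, G.Adj w z ∧ G.Adj w' z)
      ∨ p + 3 ≤ 4 * t1 := by
    by_cases hh : ∀ w ∈ A2, ∀ w' ∈ A2, ∃ z ∈ B1, G.Adj w z ∧ G.Adj w' z
    · exact Or.inl hh
    · right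
      push_neg at hh
      obtain ⟨w, hw, w', hw', hno⟩ := hh
      have hd1 := hIntCount V1 B1 hV1s hB1subV1 w (hnbrV1 w (hA2subV2 hw))
      have hd2 := hIntCount V1 B1 hV1s hB1subV1 w' (hnbrV1 w' (hA2subV2 hw'))
      have hdisj' : Disjoint (G.neighborSet w ∩ B1) (G.neighborSet w' ∩ B1) := by
        rw [Set.disjoint_left]
        rintro z ⟨hz1, hz2⟩ ⟨hz3, _⟩
        exact (hno z hz2) hz1 hz3
      have hsum : (G.neighborSet w ∩ B1).ncard + (G.neighborSet w' ∩ B1).ncard ≤ B1.ncard := by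
        rw [← Set.ncard_union_eq hdisj']
        exact Set.ncard_le_ncard (Set.union_subset Set.inter_subset_right Set.inter_subset_right)
          (Set.toFinite _)
      have hdw := hdeg4 w
      have hdw' := hdeg4 w'
      omega
  -- every vertex of A2 has a G-neighbor in B1, and vice versa
  have hA2toB1 : ∀ w ∈ A2, ∃ z ∈ B1, G.Adj w z := by
    intro w hw
    have hcnt := hIntCount V1 B1 hV1s hB1subV1 w (hnbrV1 w (hA2subV2 hw))
    have hdw := hdeg4 w
    have hne : (G.neighborSet w ∩ B1).Nonempty := by
      apply Set.nonempty_of_ncard_ne_zero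
      omega
    obtain ⟨z, hz1, hz2⟩ := hne
    exact ⟨z, hz2, hz1⟩
  have hB1toA2 : ∀ z ∈ B1, ∃ w ∈ A2, G.Adj z w := by
    intro z hz
    have hcnt := hIntCount V2 A2 hV2s hA2subV2 z (hnbrV2 z (hB1subV1 hz))
    have hdz := hdeg4 z
    have hne : (G.neighborSet z ∩ A2).Nonempty := by
      apply Set.nonempty_of_ncard_ne_zero
      omega
    obtain ⟨w, hw1, hw2⟩ := hne
    exact ⟨w, hw2, hw1⟩
  -- obtain a blue component containing all of A2 and B1
  have hdcomp : ∃ d : B.ConnectedComponent, A2 ⊆ d.supp ∧ B1 ⊆ d.supp := by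
    rcases hdichoB1 with hovB | hb2
    · -- all pairs of B1 share a common A2 neighbor
      have hB1ne : B1.Nonempty := by
        apply Set.nonempty_of_ncard_ne_zero; omega
      obtain ⟨z0, hz0⟩ := hB1ne
      refine ⟨B.connectedComponentMk z0, ?_, ?_⟩
      · intro w hw
        obtain ⟨z, hz, hadj⟩ := hA2toB1 w hw
        have hb : B.Adj w z := hcross w hw z hz hadj
        obtain ⟨w', hw', hadj1, hadj2⟩ := hovB z hz z0 hz0
        have hb1 : B.Adj z w' := hcross w' hw' z hz hadj1.symm |>.symm
        have hb2 : B.Adj z0 w' := hcross w' hw' z0 hz0 hadj2.symm |>.symm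
        rw [ConnectedComponent.mem_supp_iff, ConnectedComponent.eq]
        exact hb.reachable.trans ((hb1.reachable.trans hb2.reachable.symm))
      · intro z hz
        obtain ⟨w', hw', hadj1, hadj2⟩ := hovB z hz z0 hz0
        have hb1 : B.Adj z w' := hcross w' hw' z hz hadj1.symm |>.symm
        have hb2 : B.Adj z0 w' := hcross w' hw' z0 hz0 hadj2.symm |>.symm
        rw [ConnectedComponent.mem_supp_iff, ConnectedComponent.eq]
        exact hb1.reachable.trans hb2.reachable.symm
    rcases hdichoA2 with hovA | hb1
    · -- all pairs of A2 share a common B1 neighbor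
      have hA2ne : A2.Nonempty := by
        apply Set.nonempty_of_ncard_ne_zero; omega
      obtain ⟨w0, hw0⟩ := hA2ne
      refine ⟨B.connectedComponentMk w0, ?_, ?_⟩
      · intro w hw
        obtain ⟨z', hz', hadj1, hadj2⟩ := hovA w hw w0 hw0
        have hb1 : B.Adj w z' := hcross w hw z' hz' hadj1
        have hb2 : B.Adj w0 z' := hcross w0 hw0 z' hz' hadj2
        rw [ConnectedComponent.mem_supp_iff, ConnectedComponent.eq]
        exact hb1.reachable.trans hb2.reachable.symm
      · intro z hz
        obtain ⟨w, hw, hadj⟩ := hB1toA2 z hz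
        have hb : B.Adj z w := (hcross w hw z hz hadj.symm).symm
        obtain ⟨z', hz', hadj1, hadj2⟩ := hovA w hw w0 hw0
        have hb1 : B.Adj w z' := hcross w hw z' hz' hadj1
        have hb2 : B.Adj w0 z' := hcross w0 hw0 z' hz' hadj2
        rw [ConnectedComponent.mem_supp_iff, ConnectedComponent.eq]
        exact hb.reachable.trans (hb1.reachable.trans hb2.reachable.symm)
    · -- both failure bounds: contradiction
      exfalso
      omega
  obtain ⟨d, hdA2, hdB1⟩ := hdcomp
  -- apply maximality of c
  have hmax1 : n ≤ ((V1 : Set V) ∩ d.supp).ncard := by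
    refine le_trans hB1n (Set.ncard_le_ncard ?_ (Set.toFinite _))
    intro z hz
    exact ⟨hB1subV1 hz, hdB1 hz⟩
  have hmax2 : n ≤ ((V2 : Set V) ∩ d.supp).ncard := by
    refine le_trans hA2n (Set.ncard_le_ncard ?_ (Set.toFinite _))
    intro w hw
    exact ⟨hA2subV2 hw, hdA2 hw⟩
  have hdc := hmax d hmax1 hmax2
  have hdsum : A2.ncard + B1.ncard ≤ d.supp.ncard := by
    have hdisj' : Disjoint A2 B1 :=
      Set.disjoint_of_subset hA2subV2 hB1subV1 hV12.symm
    rw [← Set.ncard_union_eq hdisj']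
    exact Set.ncard_le_ncard (Set.union_subset hdA2 hdB1) (Set.toFinite _)
  have hcsum : c.supp.ncard ≤ X.ncard + Y.ncard + S.ncard := by
    have hsub : c.supp ⊆ (X ∪ Y) ∪ S := by
      intro v hv
      by_cases hvS : v ∈ S
      · exact Or.inr hvS
      · rcases hmemside v with h | h
        · exact Or.inl (Or.inl ⟨⟨h, hv⟩, hvS⟩)
        · exact Or.inl (Or.inr ⟨⟨h, hv⟩, hvS⟩)
    calc c.supp.ncard ≤ ((X ∪ Y) ∪ S).ncard := Set.ncard_le_ncard hsub (Set.toFinite _)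
      _ ≤ (X ∪ Y).ncard + S.ncard := Set.ncard_union_le _ _
      _ ≤ X.ncard + Y.ncard + S.ncard := by
          have := Set.ncard_union_le X Y; omega
  -- final contradiction
  omega
end

section
/- Let G be a balanced bipartite graph with parts V1, V2 of size m+n-1 each (m > n ≥ 1) and δ(G) > (3/4)(m+n-1). Fix a red-blue edge-coloring, let R be a largest red component with |V(R) ∩ V_i| ≥ m for both i, let T be a minimum vertex cover of R, and set R'_i = (V(R) ∩ V_i) \ T, V'_i = V_i \ V(R). If |T ∩ V_1| ≤ (m-1)/2, then all vertices of R'_2 lie in a single connected component H of the blue subgraph, and moreover |V(H) ∩ V_1| ≥ n+1. -/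
open SimpleGraph Set

theorem stmt_14 {V : Type*} [Fintype V] [DecidableEq V] (m n : ℕ) (hn : 1 ≤ n) (hmn : n < m)
    (G : SimpleGraph V) (V1 V2 : Finset V)
    (hdisj : Disjoint V1 V2) (hcover : V1 ∪ V2 = Finset.univ)
    (hV1 : V1.card = m + n - 1) (hV2 : V2.card = m + n - 1)
    (hbip : ∀ x y, G.Adj x y → (x ∈ V1 ∧ y ∈ V2) ∨ (x ∈ V2 ∧ y ∈ V1))
    (hδ : ∀ v, 3 * (m + n - 1) < 4 * (G.neighborSet v).ncard)
    (R B : SimpleGraph V) (hcolor : R ⊔ B = G) (hcdisj : Disjoint R B)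
    (hnored : ¬ ConnMatching R m)
    (c : R.ConnectedComponent)
    (hmax : ∀ c' : R.ConnectedComponent, c'.supp.ncard ≤ c.supp.ncard)
    (hc1 : m ≤ ((V1 : Set V) ∩ c.supp).ncard) (hc2 : m ≤ ((V2 : Set V) ∩ c.supp).ncard)
    (T : Set V) (hTsub : T ⊆ c.supp)
    (hTcov : ∀ x y, R.Adj x y → x ∈ c.supp → x ∈ T ∨ y ∈ T)
    (hTmin : ∀ T' : Set V, T' ⊆ c.supp →
      (∀ x y, R.Adj x y → x ∈ c.supp → x ∈ T' ∨ y ∈ T') → T.ncard ≤ T'.ncard)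
    (hT1 : 2 * (T ∩ ↑V1).ncard ≤ m - 1) :
    ∃ d : B.ConnectedComponent,
      (∀ v ∈ (↑V2 ∩ c.supp) \ T, v ∈ d.supp) ∧
      n + 1 ≤ ((V1 : Set V) ∩ d.supp).ncard := by
  classical
  have hfin : ∀ s : Set V, s.Finite := fun s => s.toFinite
  have hRG : R ≤ G := by rw [← hcolor]; exact le_sup_left
  have hGadj : ∀ u w, G.Adj u w ↔ R.Adj u w ∨ B.Adj u w := by
    intro u w; rw [← hcolor]; rfl
  have hnbr : ∀ u w, u ∈ V2 → G.Adj u w → w ∈ V1 := by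
    intro u w hu h
    rcases hbip u w h with ⟨h1, _⟩ | ⟨_, h2⟩
    · exact absurd hu (Finset.disjoint_left.mp hdisj h1)
    · exact h2
  have hsupp : ∀ x y, R.Adj x y → x ∈ c.supp → y ∈ c.supp := by
    intro x y hxy hx
    rw [ConnectedComponent.mem_supp_iff] at hx ⊢
    rw [← hx]
    exact ConnectedComponent.sound hxy.symm.reachable
  have hblue : ∀ u w, u ∈ c.supp → u ∉ T → w ∉ T → G.Adj u w → B.Adj u w := by
    intro u w hu huT hwT h
    rcases (hGadj u w).mp h with hr | hb
    · rcases hTcov u w hr hu with h1 | h2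
      · exact absurd h1 huT
      · exact absurd h2 hwT
    · exact hb
  -- Step 1 : R'_2 is nonempty
  have hne : ∃ v0, v0 ∈ ((↑V2 : Set V) ∩ c.supp) \ T := by
    by_contra hcon
    push_neg at hcon
    have hsub : (↑V2 : Set V) ∩ c.supp ⊆ T := by
      intro v hv
      by_contra hvT
      exact hcon v ⟨hv, hvT⟩
    set S : Finset V := V2.filter (fun v => v ∈ c.supp) with hS
    have hSmem : ∀ x, x ∈ S ↔ x ∈ V2 ∧ x ∈ c.supp := by
      intro x; simp [hS]
    have hSca : m ≤ S.card := by
      rw [← Set.ncard_coe_finset]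
      refine le_trans hc2 (Set.ncard_le_ncard ?_ (hfin _))
      rintro x ⟨hx1, hx2⟩
      exact Finset.mem_coe.mpr ((hSmem x).mpr ⟨hx1, hx2⟩)
    have hST : ∀ x ∈ S, x ∈ T := by
      intro x hx
      obtain ⟨h1, h2⟩ := (hSmem x).mp hx
      exact hsub ⟨h1, h2⟩
    set t : V → Finset V := fun v => Finset.univ.filter (fun w => R.Adj v w ∧ w ∈ V1 ∧ w ∉ T) with ht
    have htmem : ∀ v w, w ∈ t v ↔ (R.Adj v w ∧ w ∈ V1 ∧ w ∉ T) := by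
      intro v w; simp [ht]
    -- Hall's condition
    have hall : ∀ fs : Finset ↥S, fs.card ≤ (fs.biUnion fun x => t ↑x).card := by
      intro fs
      by_contra hlt
      push_neg at hlt
      set s' : Finset V := fs.image Subtype.val with hs'
      have hs'card : s'.card = fs.card := Finset.card_image_of_injective _ Subtype.val_injective
      have hbieq : s'.biUnion t = fs.biUnion fun x => t ↑x := Finset.image_biUnion
      have hs'T : (↑s' : Set V) ⊆ T := by
        intro x hx
        rw [Finset.mem_coe, hs', Finset.mem_image] at hx
        obtain ⟨y, _, rfl⟩ := hx
        exact hST _ y.2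
      have hs'V2 : ∀ x ∈ s', x ∈ V2 := by
        intro x hx
        rw [hs', Finset.mem_image] at hx
        obtain ⟨y, _, rfl⟩ := hx
        exact ((hSmem _).mp y.2).1
      set T' : Set V := (T \ ↑s') ∪ ↑(s'.biUnion t) with hT'
      have hT'sub : T' ⊆ c.supp := by
        rintro x (⟨hx, _⟩ | hx)
        · exact hTsub hx
        · rw [Finset.mem_coe, Finset.mem_biUnion] at hx
          obtain ⟨v, hvs, hvt⟩ := hx
          rw [htmem] at hvt
          exact hsupp v x hvt.1 (hTsub (hs'T (Finset.mem_coe.mpr hvs)))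
      have hT'cov : ∀ x y, R.Adj x y → x ∈ c.supp → x ∈ T' ∨ y ∈ T' := by
        intro x y hxy hx
        rcases hTcov x y hxy hx with hxT | hyT
        · by_cases hxs : x ∈ s'
          · have hx2 : x ∈ V2 := hs'V2 x hxs
            have hy1 : y ∈ V1 := hnbr x y hx2 (hRG hxy)
            by_cases hyT' : y ∈ T
            · right
              exact Or.inl ⟨hyT', fun hc =>
                Finset.disjoint_left.mp hdisj hy1 (hs'V2 y (Finset.mem_coe.mp hc))⟩
            · right
              exact Or.inr (Finset.mem_coe.mpr (Finset.mem_biUnion.mpr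
                ⟨x, hxs, (htmem x y).mpr ⟨hxy, hy1, hyT'⟩⟩))
          · exact Or.inl (Or.inl ⟨hxT, fun h => hxs (Finset.mem_coe.mp h)⟩)
        · by_cases hys : y ∈ s'
          · have hy2 : y ∈ V2 := hs'V2 y hys
            have hx1 : x ∈ V1 := hnbr y x hy2 (hRG hxy.symm)
            by_cases hxT' : x ∈ T
            · left
              exact Or.inl ⟨hxT', fun hc =>
                Finset.disjoint_left.mp hdisj hx1 (hs'V2 x (Finset.mem_coe.mp hc))⟩
            · left
              exact Or.inr (Finset.mem_coe.mpr (Finset.mem_biUnion.mpr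
                ⟨y, hys, (htmem y x).mpr ⟨hxy.symm, hx1, hxT'⟩⟩))
          · exact Or.inr (Or.inl ⟨hyT, fun h => hys (Finset.mem_coe.mp h)⟩)
      have hmin := hTmin T' hT'sub hT'cov
      have hd : (T \ (↑s' : Set V)).ncard = T.ncard - s'.card := by
        rw [Set.ncard_diff hs'T, Set.ncard_coe_finset]
      have hu : T'.ncard ≤ (T \ ↑s').ncard + ((↑(s'.biUnion t) : Set V)).ncard :=
        Set.ncard_union_le _ _
      have hb : ((↑(s'.biUnion t) : Set V)).ncard < fs.card := by
        rw [Set.ncard_coe_finset, hbieq]; exact hlt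
      have hsT : s'.card ≤ T.ncard := by
        rw [← Set.ncard_coe_finset]
        exact Set.ncard_le_ncard hs'T (hfin _)
      rw [hs'card] at hd hsT
      omega
    obtain ⟨f, hfinj, hfmem⟩ :=
      (Finset.all_card_le_biUnion_card_iff_exists_injective (fun x : ↥S => t ↑x)).mp hall
    have hm' : m ≤ (Finset.univ : Finset ↥S).card := by
      rw [Finset.card_univ, Fintype.card_coe]; exact hSca
    obtain ⟨S0, -, hS0card⟩ := Finset.exists_subset_card_eq hm'
    have hfP : ∀ x : ↥S, R.Adj ↑x (f x) ∧ f x ∈ V1 ∧ f x ∉ T := fun x => (htmem _ _).mp (hfmem x)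
    have hxV2 : ∀ x : ↥S, (↑x : V) ∈ V2 := fun x => ((hSmem _).mp x.2).1
    have hxC : ∀ x : ↥S, (↑x : V) ∈ c.supp := fun x => ((hSmem _).mp x.2).2
    have hne' : ∀ x y : ↥S, (↑x : V) ≠ f y := by
      intro x y h
      have h2 := (hfP y).2.1
      rw [← h] at h2
      exact Finset.disjoint_left.mp hdisj h2 (hxV2 x)
    have hadj_sub : ∀ {a b : V}, (∃ x ∈ S0, (a = ↑x ∧ b = f x) ∨ (a = f x ∧ b = ↑x)) →
        R.Adj a b := by
      rintro a b ⟨x, hx, ⟨rfl, rfl⟩ | ⟨rfl, rfl⟩⟩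
      · exact (hfP x).1
      · exact (hfP x).1.symm
    set M : R.Subgraph :=
      { verts := {v | ∃ x ∈ S0, v = ↑x ∨ v = f x}
        Adj := fun a b => ∃ x ∈ S0, (a = ↑x ∧ b = f x) ∨ (a = f x ∧ b = ↑x)
        adj_sub := hadj_sub
        edge_vert := by
          rintro a b ⟨x, hx, ⟨rfl, -⟩ | ⟨rfl, -⟩⟩
          · exact ⟨x, hx, Or.inl rfl⟩
          · exact ⟨x, hx, Or.inr rfl⟩
        symm := by
          constructor
          rintro a b ⟨x, hx, ⟨h1, h2⟩ | ⟨h1, h2⟩⟩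
          · exact ⟨x, hx, Or.inr ⟨h2, h1⟩⟩
          · exact ⟨x, hx, Or.inl ⟨h2, h1⟩⟩ } with hM
    refine hnored ⟨M, ?_, ?_, c, ?_⟩
    · -- matching
      rintro v ⟨x, hx, rfl | rfl⟩
      · refine ⟨f x, ⟨x, hx, Or.inl ⟨rfl, rfl⟩⟩, ?_⟩
        rintro w ⟨y, hy, ⟨h1, h2⟩ | ⟨h1, h2⟩⟩
        · rw [h2, Subtype.val_injective h1]
        · exact absurd h1 (hne' x y)
      · refine ⟨↑x, ⟨x, hx, Or.inr ⟨rfl, rfl⟩⟩, ?_⟩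
        rintro w ⟨y, hy, ⟨h1, h2⟩ | ⟨h1, h2⟩⟩
        · exact absurd h1.symm (hne' y x)
        · rw [h2, hfinj h1]
    · -- edge count
      have hedge : M.edgeSet = (fun x : ↥S => s(↑x, f x)) '' ↑S0 := by
        ext e
        refine Sym2.inductionOn e fun a b => ?_
        rw [Subgraph.mem_edgeSet]
        constructor
        · rintro ⟨x, hx, ⟨rfl, rfl⟩ | ⟨rfl, rfl⟩⟩
          · exact ⟨x, hx, rfl⟩
          · exact ⟨x, hx, Sym2.eq_swap⟩
        · rintro ⟨x, hx, he⟩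
          rcases Sym2.eq_iff.mp he with ⟨rfl, rfl⟩ | ⟨rfl, rfl⟩
          · exact ⟨x, Finset.mem_coe.mp hx, Or.inl ⟨rfl, rfl⟩⟩
          · exact ⟨x, Finset.mem_coe.mp hx, Or.inr ⟨rfl, rfl⟩⟩
      rw [hedge, Set.ncard_image_of_injOn, Set.ncard_coe_finset, hS0card]
      intro x hx y hy hxy
      rcases Sym2.eq_iff.mp hxy with ⟨h1, -⟩ | ⟨h1, -⟩
      · exact Subtype.val_injective h1
      · exact absurd h1 (hne' x y)
    · -- connectivity
      rintro v ⟨x, hx, rfl | rfl⟩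
      · rw [← ConnectedComponent.mem_supp_iff]; exact hxC x
      · rw [ConnectedComponent.sound (hfP x).1.symm.reachable, ← ConnectedComponent.mem_supp_iff]
        exact hxC x
  -- Step 2 : common blue neighbours
  have hV1card : (↑V1 : Set V).ncard = m + n - 1 := by rw [Set.ncard_coe_finset, hV1]
  have hcommon : ∀ v ∈ ((↑V2 : Set V) ∩ c.supp) \ T, ∀ u ∈ ((↑V2 : Set V) ∩ c.supp) \ T,
      ∃ w, B.Adj v w ∧ B.Adj u w := by
    intro v hv u hu
    obtain ⟨⟨hv2, hvc⟩, hvT⟩ := hv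
    obtain ⟨⟨hu2, huc⟩, huT⟩ := hu
    have hNv : G.neighborSet v ⊆ ↑V1 := fun w hw => hnbr v w hv2 hw
    have hNu : G.neighborSet u ⊆ ↑V1 := fun w hw => hnbr u w hu2 hw
    have h1 := hδ v
    have h2 := hδ u
    have hun : (G.neighborSet v ∪ G.neighborSet u).ncard ≤ m + n - 1 := by
      rw [← hV1card]
      exact Set.ncard_le_ncard (union_subset hNv hNu) (hfin _)
    have hint := Set.ncard_inter_add_ncard_union (G.neighborSet v) (G.neighborSet u)
    have hTm : ¬ (G.neighborSet v ∩ G.neighborSet u ⊆ T ∩ ↑V1) := by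
      intro hsub2
      have h3 := Set.ncard_le_ncard hsub2 (hfin _)
      omega
    rw [Set.not_subset] at hTm
    obtain ⟨w, hwmem, hwT⟩ := hTm
    obtain ⟨hw1, hw2⟩ := hwmem
    have hwV1 : w ∈ V1 := hNv hw1
    have hwT' : w ∉ T := fun h => hwT ⟨h, hwV1⟩
    exact ⟨w, hblue v w hvc hvT hwT' hw1, hblue u w huc huT hwT' hw2⟩
  obtain ⟨v0, hv0⟩ := hne
  obtain ⟨⟨hv02, hv0c⟩, hv0T⟩ := id hv0
  refine ⟨B.connectedComponentMk v0, ?_, ?_⟩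
  · intro v hv
    obtain ⟨w, hvw, h0w⟩ := hcommon v hv v0 hv0
    rw [ConnectedComponent.mem_supp_iff]
    exact ConnectedComponent.sound (hvw.reachable.trans h0w.symm.reachable)
  · have hXsub : G.neighborSet v0 \ T ⊆ ↑V1 ∩ (B.connectedComponentMk v0).supp := by
      rintro w ⟨hw, hwT⟩
      refine ⟨hnbr v0 w hv02 hw, ?_⟩
      rw [ConnectedComponent.mem_supp_iff]
      exact ConnectedComponent.sound ((hblue v0 w hv0c hv0T hwT hw).symm.reachable)
    have h1 := hδ v0
    have hTN : (T ∩ G.neighborSet v0).ncard ≤ (T ∩ ↑V1).ncard := by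
      refine Set.ncard_le_ncard ?_ (hfin _)
      rintro x ⟨hx1, hx2⟩
      exact ⟨hx1, hnbr v0 x hv02 hx2⟩
    have hdiff : (G.neighborSet v0 \ T).ncard
        = (G.neighborSet v0).ncard - (T ∩ G.neighborSet v0).ncard := by
      rw [← Set.diff_inter_self_eq_diff]
      exact Set.ncard_diff inter_subset_right
    have hle : (G.neighborSet v0 \ T).ncard
        ≤ ((↑V1 : Set V) ∩ (B.connectedComponentMk v0).supp).ncard :=
      Set.ncard_le_ncard hXsub (hfin _)
    have hTNle : (T ∩ G.neighborSet v0).ncard ≤ (G.neighborSet v0).ncard :=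
      Set.ncard_le_ncard inter_subset_right (hfin _)
    omega
end
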